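/- arXiv:2603.25679 — 2 statements merged into one kernel-verified Lean document; each statement's English description precedes it below -/
import Mathlib

section
/- Let R be a ring, n ≥ 1, d ∈ ℕ* ∪ {∞}, and M a finitely generated R-module. Then M is FP_n^{≤d}-projective if and only if M is finitely n-presented with projective dimension at most d. -/
set_option linter.unnecessarySimpa false
set_option linter.unusedVariables false

universe u

/-- `M` is a finitely `n`-presented `R`-module. -/
def FinNPres (R : Type u) [Ring R] : ℕ → (M : Type u) → [AddCommGroup M] → [Module R M] → Prop
  | 0, M, _, _ => Module.Finite R M
  | n+1, M, _, _ => ∃ (k : ℕ) (f : (Fin k → R) →ₗ[R] M), Function.Surjective f ∧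
      FinNPres R n (LinearMap.ker f)

/-- `M` has projective dimension at most `d` (finite `d`). -/
def ProjDimLE (R : Type u) [Ring R] : ℕ → (M : Type u) → [AddCommGroup M] → [Module R M] → Prop
  | 0, M, _, _ => Module.Projective R M
  | d+1, M, _, _ => ∃ (ι : Type u) (f : (ι →₀ R) →ₗ[R] M), Function.Surjective f ∧
      ProjDimLE R d (LinearMap.ker f)

/-- Projective dimension at most `d` for `d : ℕ∞`; `d = ⊤` imposes no condition. -/
def ProjDimLE' (R : Type u) [Ring R] (d : ℕ∞) (M : Type u) [AddCommGroup M] [Module R M] : Prop :=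
  ∀ k : ℕ, (k : ℕ∞) = d → ProjDimLE R k M

/-- `Ext¹_R(M, N) = 0`, expressed by the splitting of all extensions of `M` by `N`. -/
def Ext1Zero (R : Type u) [Ring R] (M N : Type u) [AddCommGroup M] [Module R M]
    [AddCommGroup N] [Module R N] : Prop :=
  ∀ (X : Type u) [AddCommGroup X] [Module R X] (i : N →ₗ[R] X) (p : X →ₗ[R] M),
    Function.Injective i → Function.Surjective p → LinearMap.range i = LinearMap.ker p →
    ∃ r : X →ₗ[R] N, r ∘ₗ i = LinearMap.id

/-- `N` is `FPₙ^{≤d}`-injective: `Ext¹_R(K, N) = 0` for every finitely `n`-presented `K`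
of projective dimension at most `d`. -/
def FPdInj (R : Type u) [Ring R] (n : ℕ) (d : ℕ∞) (N : Type u)
    [AddCommGroup N] [Module R N] : Prop :=
  ∀ (K : Type u) [AddCommGroup K] [Module R K],
    FinNPres R n K → ProjDimLE' R d K → Ext1Zero R K N

/-- `M` is `FPₙ^{≤d}`-projective: `Ext¹_R(M, N) = 0` for every `FPₙ^{≤d}`-injective `N`. -/
def FPdProj (R : Type u) [Ring R] (n : ℕ) (d : ℕ∞) (M : Type u)
    [AddCommGroup M] [Module R M] : Prop :=
  ∀ (N : Type u) [AddCommGroup N] [Module R N], FPdInj R n d N → Ext1Zero R M N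

open LinearMap CategoryTheory

section Helpers

variable {R : Type u} [Ring R]

theorem projDimLE'_top (M : Type u) [AddCommGroup M] [Module R M] : ProjDimLE' R ⊤ M := by
  intro k hk
  exact absurd hk (by simp)

/-- Factor a map through an injection whose range contains its range. -/
theorem exists_factor_inj {N E X : Type u} [AddCommGroup N] [Module R N] [AddCommGroup E]
    [Module R E] [AddCommGroup X] [Module R X] (j : N →ₗ[R] E) (hj : Function.Injective j)
    (w : X →ₗ[R] E) (hw : ∀ x, w x ∈ LinearMap.range j) : ∃ r : X →ₗ[R] N, j ∘ₗ r = w := by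
  set e := LinearEquiv.ofInjective j hj
  have h1 : ∀ y : LinearMap.range j, j (e.symm y) = (y : E) := by
    intro y
    have h2 := congrArg Subtype.val (e.apply_symm_apply y)
    rw [LinearEquiv.ofInjective_apply] at h2
    exact h2
  refine ⟨e.symm.toLinearMap ∘ₗ LinearMap.codRestrict (LinearMap.range j) w hw, ?_⟩
  ext x
  exact h1 ⟨w x, hw x⟩

/-- Factor a map through a surjection that kills its kernel. -/
theorem exists_factor_surj {F K X : Type u} [AddCommGroup F] [Module R F] [AddCommGroup K]
    [Module R K] [AddCommGroup X] [Module R X] (p : F →ₗ[R] K) (hp : Function.Surjective p)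
    (τ : F →ₗ[R] X) (h : LinearMap.ker p ≤ LinearMap.ker τ) :
    ∃ σ : K →ₗ[R] X, σ ∘ₗ p = τ := by
  refine ⟨((LinearMap.ker p).liftQ τ h) ∘ₗ
      (LinearMap.quotKerEquivOfSurjective p hp).symm.toLinearMap, ?_⟩
  ext x
  have he : (LinearMap.quotKerEquivOfSurjective p hp) (Submodule.Quotient.mk x) = p x := rfl
  have : (LinearMap.quotKerEquivOfSurjective p hp).symm (p x) = Submodule.Quotient.mk x := by
    apply (LinearMap.quotKerEquivOfSurjective p hp).injective
    rw [LinearEquiv.apply_symm_apply, he]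
  simp [this]

/-- From a section of the quotient map, get a retraction onto the submodule. -/
theorem retraction_of_section {N X K' : Type u} [AddCommGroup N] [Module R N] [AddCommGroup X]
    [Module R X] [AddCommGroup K'] [Module R K'] (i : N →ₗ[R] X) (π : X →ₗ[R] K')
    (hi : Function.Injective i) (hrange : LinearMap.range i = LinearMap.ker π)
    (σ : K' →ₗ[R] X) (hσ : π ∘ₗ σ = LinearMap.id) : ∃ r : X →ₗ[R] N, r ∘ₗ i = LinearMap.id := by
  have hmem : ∀ x, ((LinearMap.id : X →ₗ[R] X) - σ ∘ₗ π) x ∈ LinearMap.range i := by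
    intro x
    rw [hrange, LinearMap.mem_ker]
    have : π (σ (π x)) = π x := LinearMap.ext_iff.1 hσ (π x)
    simp [this]
  obtain ⟨r, hr⟩ := exists_factor_inj i hi _ hmem
  refine ⟨r, ?_⟩
  ext n
  apply hi
  have h1 : i (r (i n)) = ((LinearMap.id : X →ₗ[R] X) - σ ∘ₗ π) (i n) := LinearMap.ext_iff.1 hr (i n)
  have h2 : π (i n) = 0 := by
    rw [← LinearMap.mem_ker, ← hrange]; exact ⟨n, rfl⟩
  simp [h1, h2]

end Helpers
section Part2

variable {R : Type u} [Ring R]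

/-- `E` is an injective module (self-contained formulation). -/
def InjMod (R : Type u) [Ring R] (E : Type u) [AddCommGroup E] [Module R E] : Prop :=
  ∀ (A B : Type u) [AddCommGroup A] [Module R A] [AddCommGroup B] [Module R B]
    (f : A →ₗ[R] B), Function.Injective f → ∀ g : A →ₗ[R] E, ∃ h : B →ₗ[R] E, h ∘ₗ f = g

instance moduleCatEnoughInjectives : EnoughInjectives (ModuleCat.{u} R) :=
  ModuleCat.enoughInjectives.{u, u} R

theorem injMod_of_injective (U : ModuleCat.{u} R) [Injective U] : InjMod R U := by
  intro A B _ _ _ _ f hf g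
  have : Mono (ModuleCat.ofHom f : ModuleCat.of R A ⟶ ModuleCat.of R B) :=
    (ModuleCat.mono_iff_injective _).2 hf
  refine ⟨(Injective.factorThru (ModuleCat.ofHom g : ModuleCat.of R A ⟶ U) (ModuleCat.ofHom f)).hom, ?_⟩
  exact congrArg ModuleCat.Hom.hom
    (Injective.comp_factorThru (ModuleCat.ofHom g : ModuleCat.of R A ⟶ U) (ModuleCat.ofHom f))

/-- A chosen injective module containing a given module. -/
noncomputable def IE (Q : ModuleCat.{u} R) : ModuleCat.{u} R := Injective.under Q

instance ieInjective (Q : ModuleCat.{u} R) : Injective (IE Q) :=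
  Injective.injective_under Q

noncomputable def ieι (Q : ModuleCat.{u} R) : ↥Q →ₗ[R] ↥(IE Q) := (Injective.ι Q).hom

theorem ieι_inj (Q : ModuleCat.{u} R) : Function.Injective (ieι Q) :=
  (ModuleCat.mono_iff_injective (Injective.ι Q)).1 inferInstance

theorem ie_injMod (Q : ModuleCat.{u} R) : InjMod R ↥(IE Q) :=
  injMod_of_injective (IE Q)

/-- Iterated cosyzygies (with respect to chosen injective embeddings). -/
noncomputable def Cosyz : ℕ → ModuleCat.{u} R → ModuleCat.{u} R
  | 0, N => N
  | e+1, N => ModuleCat.of R (↥(IE (Cosyz e N)) ⧸ LinearMap.range (ieι (Cosyz e N)))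

/-- Splitting of all extensions gives the extension property for maps out of a kernel. -/
theorem extend_of_ext1Zero {M N F : Type u} [AddCommGroup M] [Module R M] [AddCommGroup N]
    [Module R N] [AddCommGroup F] [Module R F] (hz : Ext1Zero R M N) (p : F →ₗ[R] M)
    (hp : Function.Surjective p) (φ : ↥(LinearMap.ker p) →ₗ[R] N) :
    ∃ ψ : F →ₗ[R] N, ψ ∘ₗ (LinearMap.ker p).subtype = φ := by
  classical
  set D : Submodule R (N × F) :=
    LinearMap.range (LinearMap.prod φ (-((LinearMap.ker p).subtype))) with hD
  set i : N →ₗ[R] ((N × F) ⧸ D) := D.mkQ ∘ₗ LinearMap.inl R N F with hi'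
  have hDker : D ≤ LinearMap.ker (p ∘ₗ LinearMap.snd R N F) := by
    rintro x ⟨k, rfl⟩
    have : (k : F) ∈ LinearMap.ker p := k.2
    simp_all [LinearMap.mem_ker]
  set q : ((N × F) ⧸ D) →ₗ[R] M := D.liftQ (p ∘ₗ LinearMap.snd R N F) hDker with hq'
  have hmkq : ∀ nf : N × F, q (Submodule.Quotient.mk nf) = p nf.2 := fun nf => by
    simp [hq']
  have hi : Function.Injective i := by
    intro a b hab
    have : D.mkQ (a - b, 0) = 0 := by
      have : D.mkQ ((a, 0) - (b, 0)) = 0 := by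
        rw [map_sub, sub_eq_zero]
        simpa [hi'] using hab
      simpa using this
    rw [Submodule.mkQ_apply, Submodule.Quotient.mk_eq_zero] at this
    obtain ⟨k, hk⟩ := this
    have hk2 : -(k : F) = 0 := congrArg Prod.snd hk
    have hk0 : k = 0 := by
      have : (k : F) = 0 := by simpa using hk2
      exact Subtype.ext this
    have hk1 : φ k = a - b := congrArg Prod.fst hk
    rw [hk0, map_zero] at hk1
    have := hk1.symm
    rwa [sub_eq_zero] at this
  have hq : Function.Surjective q := by
    intro m
    obtain ⟨x, hx⟩ := hp m
    exact ⟨D.mkQ (0, x), by simp [Submodule.mkQ_apply, hmkq, hx]⟩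
  have hrange : LinearMap.range i = LinearMap.ker q := by
    apply le_antisymm
    · rintro x ⟨n, rfl⟩
      simp [LinearMap.mem_ker, hi', Submodule.mkQ_apply, hmkq]
    · rintro x hx
      obtain ⟨⟨n, f⟩, rfl⟩ := Submodule.mkQ_surjective D x
      have hf : f ∈ LinearMap.ker p := by
        simpa [LinearMap.mem_ker, Submodule.mkQ_apply, hmkq] using hx
      refine ⟨n + φ ⟨f, hf⟩, ?_⟩
      rw [hi']
      show D.mkQ (n + φ ⟨f, hf⟩, 0) = D.mkQ (n, f)
      rw [Submodule.mkQ_apply, Submodule.mkQ_apply, Submodule.Quotient.eq]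
      exact ⟨⟨f, hf⟩, by simp⟩
  obtain ⟨r, hr⟩ := hz _ i q hi hq hrange
  refine ⟨r ∘ₗ D.mkQ ∘ₗ LinearMap.inr R N F, ?_⟩
  ext k
  have h1 : D.mkQ (0, (k : F)) = i (φ k) := by
    rw [hi']
    show D.mkQ (0, (k : F)) = D.mkQ (φ k, 0)
    rw [Submodule.mkQ_apply, Submodule.mkQ_apply, Submodule.Quotient.eq]
    exact ⟨-k, by simp⟩
  have h2 : r (i (φ k)) = φ k := LinearMap.ext_iff.1 hr (φ k)
  simpa [h1] using h2

/-- If all maps from the kernel of a projective presentation into `N` extend, then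
`Ext¹(K', N) = 0`. -/
theorem ext1Zero_of_extendable {K' N F : Type u} [AddCommGroup K'] [Module R K']
    [AddCommGroup N] [Module R N] [AddCommGroup F] [Module R F] [Module.Projective R F]
    (p : F →ₗ[R] K') (hp : Function.Surjective p)
    (hext : ∀ h : ↥(LinearMap.ker p) →ₗ[R] N,
      ∃ H : F →ₗ[R] N, H ∘ₗ (LinearMap.ker p).subtype = h) :
    Ext1Zero R K' N := by
  intro X _ _ i π hi hπ hrange
  obtain ⟨q, hq⟩ := Module.projective_lifting_property π p hπ
  have hmem : ∀ x, (q ∘ₗ (LinearMap.ker p).subtype) x ∈ LinearMap.range i := by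
    intro s
    rw [hrange, LinearMap.mem_ker]
    have h1 : π (q (s : F)) = p (s : F) := LinearMap.ext_iff.1 hq (s : F)
    simpa [h1] using s.2
  obtain ⟨h, hh⟩ := exists_factor_inj i hi _ hmem
  obtain ⟨H, hH⟩ := hext h
  have hker : LinearMap.ker p ≤ LinearMap.ker (q - i ∘ₗ H) := by
    intro s hs
    rw [LinearMap.mem_ker]
    have e1 : H s = h ⟨s, hs⟩ := LinearMap.ext_iff.1 hH ⟨s, hs⟩
    have e2 : i (h ⟨s, hs⟩) = q s := LinearMap.ext_iff.1 hh ⟨s, hs⟩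
    simp [e1, e2]
  obtain ⟨σ, hσ⟩ := exists_factor_surj p hp _ hker
  have hπσ : π ∘ₗ σ = LinearMap.id := by
    apply LinearMap.ext
    intro k'
    obtain ⟨x, rfl⟩ := hp k'
    have e3 : σ (p x) = (q - i ∘ₗ H) x := LinearMap.ext_iff.1 hσ x
    have e4 : π (q x) = p x := LinearMap.ext_iff.1 hq x
    have e5 : π (i (H x)) = 0 := by
      rw [← LinearMap.mem_ker, ← hrange]; exact ⟨H x, rfl⟩
    simp [e3, e4, e5]
  exact retraction_of_section i π hi hrange σ hπσ

end Part2
section Part3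

variable {R : Type u} [Ring R]

/-- Projective modules have vanishing `Ext¹`. -/
theorem ext1Zero_of_projective {K' N : Type u} [AddCommGroup K'] [Module R K']
    [AddCommGroup N] [Module R N] (h : Module.Projective R K') : Ext1Zero R K' N := by
  intro X _ _ i π hi hπ hrange
  obtain ⟨σ, hσ⟩ := Module.projective_lifting_property π (LinearMap.id : K' →ₗ[R] K') hπ
  exact retraction_of_section i π hi hrange σ hσ

/-- If `Ext¹(X, N) = 0` for all `N`, then `X` is projective. -/
theorem projective_of_ext1Zero {X : Type u} [AddCommGroup X] [Module R X]
    (h : ∀ (N : Type u) [AddCommGroup N] [Module R N], Ext1Zero R X N) :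
    Module.Projective R X := by
  set f : (X →₀ R) →ₗ[R] X := Finsupp.linearCombination R (id : X → X) with hf'
  have hf : Function.Surjective f := Finsupp.linearCombination_id_surjective R X
  have hrange : LinearMap.range (LinearMap.ker f).subtype = LinearMap.ker f :=
    Submodule.range_subtype _
  obtain ⟨r, hr⟩ := h (↥(LinearMap.ker f)) (X →₀ R) (LinearMap.ker f).subtype f
    (Submodule.injective_subtype _) hf hrange
  have hker : LinearMap.ker f ≤
      LinearMap.ker ((LinearMap.id : (X →₀ R) →ₗ[R] (X →₀ R)) - (LinearMap.ker f).subtype ∘ₗ r) := by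
    intro x hx
    rw [LinearMap.mem_ker]
    have e1 : r ((⟨x, hx⟩ : ↥(LinearMap.ker f)) : X →₀ R) = ⟨x, hx⟩ :=
      LinearMap.ext_iff.1 hr ⟨x, hx⟩
    simp [e1]
  obtain ⟨s, hs⟩ := exists_factor_surj f hf _ hker
  rw [Module.projective_def']
  refine ⟨s, ?_⟩
  apply LinearMap.ext
  intro x
  obtain ⟨y, rfl⟩ := hf x
  have e2 : s (f y) = ((LinearMap.id : (X →₀ R) →ₗ[R] (X →₀ R)) - (LinearMap.ker f).subtype ∘ₗ r) y :=
    LinearMap.ext_iff.1 hs y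
  have e3 : f (((LinearMap.ker f).subtype ∘ₗ r) y) = 0 := by
    have h5 : ((r y : X →₀ R)) ∈ LinearMap.ker f := (r y).2
    simpa using h5
  have e4 : f (s (f y)) = f y := by
    rw [e2]
    simp only [LinearMap.sub_apply, LinearMap.id_apply, map_sub, e3]
    simp
  simpa [hf'] using e4

/-- Down-shift: `Ext¹(M, E/N') = 0` implies `Ext¹(K, N') = 0` where `K` is the kernel of a
projective presentation of `M` and `E` is injective containing `N'`. -/
theorem ext1Zero_ker {M N' E F : Type u} [AddCommGroup M] [Module R M] [AddCommGroup N']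
    [Module R N'] [AddCommGroup E] [Module R E] [AddCommGroup F] [Module R F]
    [Module.Projective R F] (j : N' →ₗ[R] E) (hj : Function.Injective j) (hE : InjMod R E)
    (p : F →ₗ[R] M) (hp : Function.Surjective p)
    (hM : Ext1Zero R M (E ⧸ LinearMap.range j)) :
    Ext1Zero R (↥(LinearMap.ker p)) N' := by
  intro X' _ _ ι ρ hι hρ hrange
  obtain ⟨θ, hθ⟩ := hE N' X' ι hι j
  have hker1 : LinearMap.ker ρ ≤ LinearMap.ker ((LinearMap.range j).mkQ ∘ₗ θ) := by
    intro x hx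
    rw [← hrange] at hx
    obtain ⟨a, rfl⟩ := hx
    have e1 : θ (ι a) = j a := LinearMap.ext_iff.1 hθ a
    rw [LinearMap.mem_ker]
    simp only [LinearMap.comp_apply, e1, Submodule.mkQ_apply, Submodule.Quotient.mk_eq_zero]
    exact ⟨a, rfl⟩
  obtain ⟨g, hg⟩ := exists_factor_surj ρ hρ _ hker1
  obtain ⟨G, hG⟩ := extend_of_ext1Zero hM p hp g
  obtain ⟨G', hG'⟩ := Module.projective_lifting_property (LinearMap.range j).mkQ G
    (Submodule.mkQ_surjective _)
  set w : X' →ₗ[R] E := θ - G' ∘ₗ (LinearMap.ker p).subtype ∘ₗ ρ with hw'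
  have hwmem : ∀ x, w x ∈ LinearMap.range j := by
    intro x
    have e1 : g (ρ x) = (LinearMap.range j).mkQ (θ x) := LinearMap.ext_iff.1 hg x
    have e2 : (LinearMap.range j).mkQ (G' ((LinearMap.ker p).subtype (ρ x))) =
        G ((LinearMap.ker p).subtype (ρ x)) :=
      LinearMap.ext_iff.1 hG' _
    have e3 : G ((LinearMap.ker p).subtype (ρ x)) = g (ρ x) := LinearMap.ext_iff.1 hG (ρ x)
    have : (LinearMap.range j).mkQ (w x) = 0 := by
      simp only [hw', LinearMap.sub_apply, map_sub, LinearMap.comp_apply, e2, e3, ← e1]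
      simp
    rwa [Submodule.mkQ_apply, Submodule.Quotient.mk_eq_zero] at this
  obtain ⟨r, hr⟩ := exists_factor_inj j hj w hwmem
  refine ⟨r, ?_⟩
  apply LinearMap.ext
  intro a
  apply hj
  have h1 : j (r (ι a)) = w (ι a) := LinearMap.ext_iff.1 hr (ι a)
  have h2 : ρ (ι a) = 0 := by
    have : ι a ∈ LinearMap.ker ρ := by rw [← hrange]; exact ⟨a, rfl⟩
    simpa [LinearMap.mem_ker] using this
  have e1 : θ (ι a) = j a := LinearMap.ext_iff.1 hθ a
  simp [h1, hw', h2, e1]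

/-- Up-shift: `Ext¹(S, N') = 0` for the kernel `S` of a projective presentation of `K'`
implies `Ext¹(K', E/N') = 0`. -/
theorem ext1Zero_quot {K' N' E F : Type u} [AddCommGroup K'] [Module R K'] [AddCommGroup N']
    [Module R N'] [AddCommGroup E] [Module R E] [AddCommGroup F] [Module R F]
    [Module.Projective R F] (p : F →ₗ[R] K') (hp : Function.Surjective p)
    (j : N' →ₗ[R] E) (hj : Function.Injective j) (hE : InjMod R E)
    (hS : Ext1Zero R (↥(LinearMap.ker p)) N') :
    Ext1Zero R K' (E ⧸ LinearMap.range j) := by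
  apply ext1Zero_of_extendable p hp
  intro h
  set π := (LinearMap.range j).mkQ with hπ'
  set ψ : (E × ↥(LinearMap.ker p)) →ₗ[R] (E ⧸ LinearMap.range j) :=
    π ∘ₗ LinearMap.fst R E (↥(LinearMap.ker p)) - h ∘ₗ LinearMap.snd R E (↥(LinearMap.ker p))
    with hψ'
  have hmemι : ∀ a : N', (LinearMap.inl R E (↥(LinearMap.ker p)) ∘ₗ j) a ∈ LinearMap.ker ψ := by
    intro a
    rw [LinearMap.mem_ker]
    simp only [hψ', LinearMap.sub_apply, LinearMap.comp_apply, LinearMap.inl_apply,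
      LinearMap.fst_apply, LinearMap.snd_apply]
    simp [hπ', Submodule.Quotient.mk_eq_zero]
  set ιY : N' →ₗ[R] ↥(LinearMap.ker ψ) :=
    LinearMap.codRestrict _ (LinearMap.inl R E (↥(LinearMap.ker p)) ∘ₗ j) hmemι with hιY'
  set pr : ↥(LinearMap.ker ψ) →ₗ[R] ↥(LinearMap.ker p) :=
    LinearMap.snd R E (↥(LinearMap.ker p)) ∘ₗ (LinearMap.ker ψ).subtype with hpr'
  have hψY : ∀ y : ↥(LinearMap.ker ψ), π ((y : E × ↥(LinearMap.ker p)).1) =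
      h ((y : E × ↥(LinearMap.ker p)).2) := by
    intro y
    have h1 : π ((y : E × ↥(LinearMap.ker p)).1) - h ((y : E × ↥(LinearMap.ker p)).2) = 0 := by
      have h0 : ψ (y : E × ↥(LinearMap.ker p)) = 0 := y.2
      simpa only [hψ', LinearMap.sub_apply, LinearMap.comp_apply, LinearMap.fst_apply,
        LinearMap.snd_apply] using h0
    exact sub_eq_zero.1 h1
  have hιYinj : Function.Injective ιY := by
    intro a b hab
    apply hj
    have := congrArg (fun y : ↥(LinearMap.ker ψ) => (y : E × ↥(LinearMap.ker p)).1) hab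
    simpa [hιY'] using this
  have hprsurj : Function.Surjective pr := by
    intro s
    obtain ⟨e, he⟩ := Submodule.mkQ_surjective (LinearMap.range j) (h s)
    refine ⟨⟨(e, s), ?_⟩, rfl⟩
    rw [LinearMap.mem_ker, hψ']
    simp [hπ', he]
  have hrangeY : LinearMap.range ιY = LinearMap.ker pr := by
    apply le_antisymm
    · rintro y ⟨a, rfl⟩
      rw [LinearMap.mem_ker]
      apply Subtype.ext
      simp [hpr', hιY']
    · rintro y hy
      rw [LinearMap.mem_ker] at hy
      have h2 : (y : E × ↥(LinearMap.ker p)).2 = 0 := by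
        have := congrArg Subtype.val hy
        simpa [hpr'] using hy
      have h1 : π ((y : E × ↥(LinearMap.ker p)).1) = 0 := by
        rw [hψY y, h2, map_zero]
      rw [hπ', Submodule.mkQ_apply, Submodule.Quotient.mk_eq_zero] at h1
      obtain ⟨a, ha⟩ := h1
      refine ⟨a, ?_⟩
      apply Subtype.ext
      rw [hιY']
      show ((LinearMap.inl R E (↥(LinearMap.ker p)) ∘ₗ j) a : E × ↥(LinearMap.ker p)) =
        (y : E × ↥(LinearMap.ker p))
      have : (y : E × ↥(LinearMap.ker p)) = ((y : E × ↥(LinearMap.ker p)).1, 0) := by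
        rw [← h2]
      rw [this]
      simp [ha]
  obtain ⟨r, hr⟩ := hS _ ιY pr hιYinj hprsurj hrangeY
  have hkerpr : LinearMap.ker pr ≤ LinearMap.ker
      ((LinearMap.id : ↥(LinearMap.ker ψ) →ₗ[R] ↥(LinearMap.ker ψ)) - ιY ∘ₗ r) := by
    intro y hy
    rw [← hrangeY] at hy
    obtain ⟨a, rfl⟩ := hy
    rw [LinearMap.mem_ker]
    have e1 : r (ιY a) = a := LinearMap.ext_iff.1 hr a
    simp [e1]
  obtain ⟨σ, hσ⟩ := exists_factor_surj pr hprsurj _ hkerpr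
  have hprσ : ∀ s, pr (σ s) = s := by
    intro s
    obtain ⟨y, rfl⟩ := hprsurj s
    have e1 : σ (pr y) = ((LinearMap.id : ↥(LinearMap.ker ψ) →ₗ[R] ↥(LinearMap.ker ψ)) - ιY ∘ₗ r) y :=
      LinearMap.ext_iff.1 hσ y
    have e2 : pr (ιY (r y)) = 0 := by
      simp [hpr', hιY']
    simp [e1, e2]
  set g : ↥(LinearMap.ker p) →ₗ[R] E :=
    LinearMap.fst R E (↥(LinearMap.ker p)) ∘ₗ (LinearMap.ker ψ).subtype ∘ₗ σ with hg'
  have hπg : ∀ s, π (g s) = h s := by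
    intro s
    have h1 := hψY (σ s)
    have e2 : ((σ s : E × ↥(LinearMap.ker p))).2 = s := by
      have := hprσ s
      simpa [hpr'] using this
    rw [hg']
    rw [e2] at h1
    simpa using h1
  obtain ⟨G, hG⟩ := hE (↥(LinearMap.ker p)) F ((LinearMap.ker p).subtype)
    (Submodule.injective_subtype _) g
  refine ⟨π ∘ₗ G, ?_⟩
  apply LinearMap.ext
  intro s
  have e1 : G (s : F) = g s := LinearMap.ext_iff.1 hG s
  have : π (G (s : F)) = h s := by rw [e1]; exact hπg s
  simpa using this

end Part3
section Part4

variable {R : Type u} [Ring R]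

theorem finite_of_finNPres : ∀ {m : ℕ} {X : Type u} [AddCommGroup X] [Module R X],
    FinNPres R m X → Module.Finite R X
  | 0, _, _, _, h => h
  | m+1, _, _, _, h => by
    obtain ⟨k, f, hf, _⟩ := h
    exact Module.Finite.of_surjective f hf

/-- `Ext¹(K', Cosyzⁱ N) = 0` whenever `K'` has projective dimension at most `e`. -/
theorem ext1Zero_cosyz_of_projDimLE : ∀ (e : ℕ) (K' : Type u) [AddCommGroup K'] [Module R K'],
    ProjDimLE R e K' → ∀ N : ModuleCat.{u} R, Ext1Zero R K' ↥(Cosyz e N)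
  | 0, K', _, _, hP, N => ext1Zero_of_projective hP
  | e+1, K', _, _, hP, N => by
    obtain ⟨ι, f, hf, hker⟩ := hP
    exact ext1Zero_quot f hf (ieι (Cosyz e N)) (ieι_inj _) (ie_injMod _)
      (ext1Zero_cosyz_of_projDimLE e _ hker N)

/-- Conversely, vanishing of `Ext¹` against all `e`-th cosyzygies forces projective
dimension at most `e`. -/
theorem projDimLE_of_ext1Zero_cosyz : ∀ (e : ℕ) (X : Type u) [AddCommGroup X] [Module R X],
    (∀ N : ModuleCat.{u} R, Ext1Zero R X ↥(Cosyz e N)) → ProjDimLE R e X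
  | 0, X, _, _, h => projective_of_ext1Zero (fun N _ _ => h (ModuleCat.of R N))
  | e+1, X, _, _, h => by
    have hf : Function.Surjective (Finsupp.linearCombination R (id : X → X)) :=
      Finsupp.linearCombination_id_surjective R X
    have hK : ∀ N : ModuleCat.{u} R,
        Ext1Zero R (↥(LinearMap.ker (Finsupp.linearCombination R (id : X → X)))) ↥(Cosyz e N) := by
      intro N
      exact ext1Zero_ker (ieι (Cosyz e N)) (ieι_inj _) (ie_injMod _)
        (Finsupp.linearCombination R (id : X → X)) hf (h N)
    exact ⟨X, Finsupp.linearCombination R (id : X → X), hf,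
      projDimLE_of_ext1Zero_cosyz e _ hK⟩

theorem projDimLE'_of_fpdProj {n : ℕ} {d : ℕ∞} {M : Type u} [AddCommGroup M] [Module R M]
    (h : FPdProj R n d M) : ProjDimLE' R d M := by
  intro e he
  apply projDimLE_of_ext1Zero_cosyz e M
  intro N
  apply h
  intro K' _ _ _ hK2
  exact ext1Zero_cosyz_of_projDimLE e K' (hK2 e he) N

end Part4
section Part5

variable {R : Type u} [Ring R]

/-- The (type of) finitely generated submodules of `K`. -/
def FGsub (R : Type u) [Ring R] (K : Type u) [AddCommGroup K] [Module R K] : Type u :=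
  {P : Submodule R K // P.FG}

/-- The injective module chosen for the quotient `K ⧸ P`. -/
noncomputable abbrev NIE (R : Type u) [Ring R] (K : Type u) [AddCommGroup K] [Module R K]
    (P : FGsub R K) : ModuleCat.{u} R :=
  IE (ModuleCat.of R (K ⧸ P.val))

/-- The "eventually zero" submodule of the product `Π P, E_P` over all finitely generated
submodules `P` of `K`. -/
noncomputable def NImod (R : Type u) [Ring R] (K : Type u) [AddCommGroup K] [Module R K] :
    Submodule R (Π P : FGsub R K, ↥(NIE R K P)) where
  carrier := {x | ∃ P₀ : FGsub R K, ∀ P : FGsub R K, P₀.val ≤ P.val → x P = 0}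
  add_mem' := by
    rintro x y ⟨P₀, hx⟩ ⟨P₁, hy⟩
    exact ⟨⟨P₀.val ⊔ P₁.val, P₀.2.sup P₁.2⟩, fun P hP => by
      rw [Pi.add_apply, hx P (le_trans le_sup_left hP), hy P (le_trans le_sup_right hP),
        add_zero]⟩
  zero_mem' := ⟨⟨⊥, Submodule.fg_bot⟩, fun P _ => rfl⟩
  smul_mem' := by
    rintro c x ⟨P₀, hx⟩
    exact ⟨P₀, fun P hP => by rw [Pi.smul_apply, hx P hP, smul_zero]⟩

/-- Any linear map from a finite module into `NImod R K` has a uniform bound. -/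
theorem niBound (K : Type u) [AddCommGroup K] [Module R K] {S : Type u} [AddCommGroup S]
    [Module R S] [Module.Finite R S] (g : S →ₗ[R] ↥(NImod R K)) :
    ∃ P₀ : FGsub R K, ∀ (s : S) (P : FGsub R K), P₀.val ≤ P.val → (g s).1 P = 0 := by
  classical
  obtain ⟨t, ht⟩ := Module.Finite.fg_top (R := R) (M := S)
  have step : ∀ u : Finset S, ∃ P₀ : FGsub R K,
      ∀ x ∈ u, ∀ P : FGsub R K, P₀.val ≤ P.val → (g x).1 P = 0 := by
    intro u
    induction u using Finset.induction_on with
    | empty => exact ⟨⟨⊥, Submodule.fg_bot⟩, by simp⟩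
    | @insert a u ha ih =>
      obtain ⟨P₀, h₀⟩ := ih
      obtain ⟨P₁, h₁⟩ := (g a).2
      refine ⟨⟨P₀.val ⊔ P₁.val, P₀.2.sup P₁.2⟩, ?_⟩
      intro x hx P hP
      rcases Finset.mem_insert.1 hx with rfl | hx
      · exact h₁ P (le_trans le_sup_right hP)
      · exact h₀ x hx P (le_trans le_sup_left hP)
  obtain ⟨P₀, hP₀⟩ := step t
  refine ⟨P₀, fun s => ?_⟩
  set T : Submodule R S :=
    { carrier := {s | ∀ P : FGsub R K, P₀.val ≤ P.val → (g s).1 P = 0}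
      add_mem' := by
        intro x y hx hy P hP
        rw [map_add]
        show ((g x).1 + (g y).1) P = 0
        rw [Pi.add_apply, hx P hP, hy P hP, add_zero]
      zero_mem' := by
        intro P hP
        rw [map_zero]
        rfl
      smul_mem' := by
        intro c x hx P hP
        rw [map_smul]
        show (c • (g x).1) P = 0
        rw [Pi.smul_apply, hx P hP, smul_zero] } with hT
  have hsub : (t : Set S) ⊆ T := fun x hx => hP₀ x hx
  have : s ∈ T := by
    have : Submodule.span R (t : Set S) ≤ T := Submodule.span_le.2 hsub
    rw [ht] at this
    exact this Submodule.mem_top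
  exact this

/-- Maps from a finite submodule into `NImod R K` extend to the ambient module. -/
theorem niExtend (K : Type u) [AddCommGroup K] [Module R K] {F' : Type u} [AddCommGroup F']
    [Module R F'] (S : Submodule R F') [Module.Finite R ↥S]
    (h : ↥S →ₗ[R] ↥(NImod R K)) : ∃ H : F' →ₗ[R] ↥(NImod R K), H ∘ₗ S.subtype = h := by
  classical
  obtain ⟨P₀, hP₀⟩ := niBound K h
  choose ext hext using fun (P : FGsub R K) =>
    (ie_injMod (ModuleCat.of R (K ⧸ P.val))) ↥S F' S.subtype (Submodule.injective_subtype S)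
      ((LinearMap.proj P : (Π Q : FGsub R K, ↥(NIE R K Q)) →ₗ[R] ↥(NIE R K P)) ∘ₗ
        (NImod R K).subtype ∘ₗ h)
  set HP : ∀ P : FGsub R K, F' →ₗ[R] ↥(NIE R K P) :=
    fun P => if P₀.val ≤ P.val then 0 else ext P with hHP
  have hmem : ∀ x, (LinearMap.pi HP) x ∈ NImod R K := by
    intro x
    refine ⟨P₀, fun P hP => ?_⟩
    have hz : HP P = 0 := by rw [hHP]; exact if_pos hP
    rw [LinearMap.pi_apply, hz]
    rfl
  refine ⟨LinearMap.codRestrict _ (LinearMap.pi HP) hmem, ?_⟩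
  apply LinearMap.ext
  intro s
  apply Subtype.ext
  funext P
  show (LinearMap.pi HP) (S.subtype s) P = (h s).1 P
  rw [LinearMap.pi_apply]
  show (if P₀.val ≤ P.val then 0 else ext P) (S.subtype s) = (h s).1 P
  by_cases hP : P₀.val ≤ P.val
  · rw [if_pos hP, hP₀ s P hP]
    rfl
  · rw [if_neg hP]
    exact LinearMap.ext_iff.1 (hext P) s

/-- `NImod R K` is `FPₙ₊₁^{≤⊤}`-injective. -/
theorem niFPdInj (K : Type u) [AddCommGroup K] [Module R K] (m : ℕ) :
    FPdInj R (m+1) ⊤ (↥(NImod R K)) := by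
  intro K' _ _ hK1 _
  obtain ⟨k', f', hf', hker'⟩ := hK1
  haveI : Module.Finite R ↥(LinearMap.ker f') := finite_of_finNPres hker'
  apply ext1Zero_of_extendable f' hf'
  intro h
  exact niExtend K (LinearMap.ker f') h

/-- Key finiteness: kernels of finite free presentations of `FPₘ₊₁^{≤⊤}`-projective modules
are finitely generated. -/
theorem finite_ker {M : Type u} [AddCommGroup M] [Module R M] {m k : ℕ}
    (f : (Fin k → R) →ₗ[R] M) (hf : Function.Surjective f)
    (h : FPdProj R (m+1) ⊤ M) : Module.Finite R ↥(LinearMap.ker f) := by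
  classical
  have hNI := h (↥(NImod R (↥(LinearMap.ker f)))) (niFPdInj _ m)
  set φ0 : ↥(LinearMap.ker f) →ₗ[R]
      Π P : FGsub R ↥(LinearMap.ker f), ↥(NIE R (↥(LinearMap.ker f)) P) :=
    LinearMap.pi (fun P => (ieι (ModuleCat.of R (↥(LinearMap.ker f) ⧸ P.val))) ∘ₗ P.val.mkQ)
    with hφ0
  have hφmem : ∀ a, φ0 a ∈ NImod R (↥(LinearMap.ker f)) := by
    intro a
    refine ⟨⟨Submodule.span R {a}, Submodule.fg_span_singleton a⟩, fun P hP => ?_⟩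
    have ha : a ∈ P.val := hP (Submodule.mem_span_singleton_self a)
    have hz : P.val.mkQ a = 0 := by
      rw [Submodule.mkQ_apply, Submodule.Quotient.mk_eq_zero]
      exact ha
    rw [hφ0]
    simp only [LinearMap.pi_apply, LinearMap.comp_apply]
    exact (congrArg (ieι (ModuleCat.of R (↥(LinearMap.ker f) ⧸ P.val))) hz).trans (map_zero _)
  obtain ⟨ψ, hψ⟩ := extend_of_ext1Zero hNI f hf
    (LinearMap.codRestrict _ φ0 hφmem)
  obtain ⟨P₀, hP₀⟩ := niBound (↥(LinearMap.ker f)) ψ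
  have hall : ∀ a : ↥(LinearMap.ker f), a ∈ P₀.val := by
    intro a
    have e1 : ψ ((LinearMap.ker f).subtype a) = LinearMap.codRestrict _ φ0 hφmem a :=
      LinearMap.ext_iff.1 hψ a
    have e2 := hP₀ ((LinearMap.ker f).subtype a) P₀ le_rfl
    rw [e1] at e2
    have e3 : (ieι (ModuleCat.of R (↥(LinearMap.ker f) ⧸ P₀.val))) (P₀.val.mkQ a) = 0 := by
      have : (LinearMap.codRestrict (NImod R (↥(LinearMap.ker f))) φ0 hφmem a).1 P₀ = 0 := e2
      rw [LinearMap.codRestrict_apply] at this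
      rw [hφ0] at this
      simpa [LinearMap.pi_apply] using this
    have e4 : P₀.val.mkQ a = 0 := by
      apply ieι_inj (ModuleCat.of R (↥(LinearMap.ker f) ⧸ P₀.val))
      rw [e3, map_zero]
    exact (Submodule.Quotient.mk_eq_zero _).1 e4
  exact ⟨Submodule.eq_top_iff'.2 hall ▸ P₀.2⟩

end Part5
section Part6

variable {R : Type u} [Ring R]

/-- A finitely generated `FPₘ^{≤⊤}`-projective module is finitely `m`-presented. -/
theorem finNPres_of_fpdProj_top : ∀ (m : ℕ) (M : Type u) [AddCommGroup M] [Module R M],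
    Module.Finite R M → FPdProj R m ⊤ M → FinNPres R m M
  | 0, M, _, _, hfg, _ => hfg
  | m+1, M, _, _, hfg, h => by
    obtain ⟨k, f, hf⟩ := Module.Finite.exists_fin' R M
    have hKfin : Module.Finite R ↥(LinearMap.ker f) := finite_ker f hf h
    have hKproj : FPdProj R m ⊤ (↥(LinearMap.ker f)) := by
      intro N' _ _ hN'
      have hC : FPdInj R (m+1) ⊤
          (↥(IE (ModuleCat.of R N')) ⧸ LinearMap.range (ieι (ModuleCat.of R N'))) := by
        intro K' _ _ hK1 _
        obtain ⟨k', f', hf', hker'⟩ := hK1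
        exact ext1Zero_quot f' hf' (ieι (ModuleCat.of R N')) (ieι_inj _) (ie_injMod _)
          (hN' (↥(LinearMap.ker f')) hker' (projDimLE'_top _))
      exact ext1Zero_ker (ieι (ModuleCat.of R N')) (ieι_inj _) (ie_injMod _) f hf (h _ hC)
    exact ⟨k, f, hf, finNPres_of_fpdProj_top m _ hKfin hKproj⟩

end Part6

/-- A finitely generated module `M` is `FPₙ^{≤d}`-projective if and only if it is finitely
`n`-presented of projective dimension at most `d`. -/
theorem fpdProj_iff_fp_n_le_d (R : Type u) [Ring R] (n : ℕ) (hn : 1 ≤ n) (d : ℕ∞) (hd : 1 ≤ d)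
    (M : Type u) [AddCommGroup M] [Module R M] (hfg : Module.Finite R M) :
    FPdProj R n d M ↔ (FinNPres R n M ∧ ProjDimLE' R d M) := by
  constructor
  · intro h
    refine ⟨?_, projDimLE'_of_fpdProj h⟩
    apply finNPres_of_fpdProj_top n M hfg
    intro N _ _ hN
    apply h
    intro K _ _ h1 _
    exact hN K h1 (projDimLE'_top K)
  · rintro ⟨h1, h2⟩ N _ _ hN
    exact hN M h1 h2
end

section
/- Let R be a left (n,d)-coherent and left self-FP_n^{≤d}-injective ring with d finite. Then every finitely n-presented R-module of projective dimension at most d is projective, i.e., FP_n^{≤d}(R) equals the class of finitely generated projective R-modules. -/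
universe u

/-- `R` is a left `(n,d)`-coherent ring. -/
def NDCohRing (R : Type u) [Ring R] (n : ℕ) (d : ℕ∞) : Prop :=
  ∀ (M : Type u) [AddCommGroup M] [Module R M],
    FinNPres R n M → ProjDimLE' R d M → FinNPres R (n + 1) M

section Aux
variable {R : Type u} [Ring R]

theorem auxProjDimLE_zero {M : Type u} [AddCommGroup M] [Module R M]
    (h : Module.Projective R M) : ProjDimLE R 0 M := h

theorem auxProjDimLE_equiv {e : ℕ} {M M' : Type u} [AddCommGroup M] [Module R M]
    [AddCommGroup M'] [Module R M'] (E : M ≃ₗ[R] M') (h : ProjDimLE R e M) :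
    ProjDimLE R e M' := by
  cases e with
  | zero =>
    have : Module.Projective R M := h
    exact Module.Projective.of_equiv E
  | succ e =>
    obtain ⟨ι, f, hf, hk⟩ := h
    refine ⟨ι, E.toLinearMap ∘ₗ f, E.surjective.comp hf, ?_⟩
    have hker : LinearMap.ker (E.toLinearMap ∘ₗ f) = LinearMap.ker f := by
      rw [LinearMap.ker_comp, LinearEquiv.ker, Submodule.comap_bot]
    rw [hker]
    exact hk


noncomputable def auxSplitEquiv {Y P : Type u} [AddCommGroup Y] [Module R Y]
    [AddCommGroup P] [Module R P] (π : Y →ₗ[R] P) (s : P →ₗ[R] Y)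
    (hs : π ∘ₗ s = LinearMap.id) : Y ≃ₗ[R] (LinearMap.ker π × P) := by
  have hms : ∀ y : Y, y - s (π y) ∈ LinearMap.ker π := by
    intro y
    have := LinearMap.congr_fun hs (π y)
    simp only [LinearMap.comp_apply, LinearMap.id_apply] at this
    simp [LinearMap.mem_ker, map_sub, this]
  refine
  { toFun := fun y => (⟨y - s (π y), hms y⟩, π y)
    invFun := fun z => z.1.1 + s z.2
    map_add' := ?_
    map_smul' := ?_
    left_inv := ?_
    right_inv := ?_ }
  · intro a b; ext <;> simp <;> abel
  · intro c a; ext <;> simp [smul_sub]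
  · intro y; simp
  · rintro ⟨⟨a, ha⟩, p⟩
    have ha' : π a = 0 := ha
    have hsp := LinearMap.congr_fun hs p
    simp only [LinearMap.comp_apply, LinearMap.id_apply] at hsp
    ext <;> simp [map_add, ha', hsp]

theorem auxKerProjective {Y P : Type u} [AddCommGroup Y] [Module R Y]
    [AddCommGroup P] [Module R P] [Module.Projective R Y] (π : Y →ₗ[R] P) (s : P →ₗ[R] Y)
    (hs : π ∘ₗ s = LinearMap.id) : Module.Projective R (LinearMap.ker π) := by
  let E := auxSplitEquiv π s hs
  refine Module.Projective.of_split (M := Y)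
    (E.symm.toLinearMap ∘ₗ LinearMap.inl R _ _)
    ((LinearMap.fst R _ _) ∘ₗ E.toLinearMap) ?_
  ext x
  simp

theorem auxProjDimLE_succ {e : ℕ} {M : Type u} [AddCommGroup M] [Module R M]
    (h : ProjDimLE R e M) : ProjDimLE R (e + 1) M := by
  induction e generalizing M with
  | zero =>
    have hp : Module.Projective R M := h
    let tot : (M →₀ R) →ₗ[R] M := Finsupp.linearCombination R id
    have htot : Function.Surjective tot := by
      intro x
      exact ⟨Finsupp.single x 1, by rw [Finsupp.linearCombination_single]; simp⟩
    obtain ⟨s, hs⟩ := Module.projective_lifting_property tot LinearMap.id htot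
    exact ⟨M, tot, htot, auxKerProjective tot s hs⟩
  | succ e ih =>
    obtain ⟨ι, f, hf, hk⟩ := h
    exact ⟨ι, f, hf, ih hk⟩

theorem auxProjDimLE_mono {e e' : ℕ} (hee : e ≤ e') {M : Type u} [AddCommGroup M] [Module R M]
    (h : ProjDimLE R e M) : ProjDimLE R e' M := by
  induction e' with
  | zero => exact (Nat.le_zero.mp hee) ▸ h
  | succ e' ih =>
    rcases Nat.lt_or_ge e (e' + 1) with hlt | hge
    · exact auxProjDimLE_succ (ih (Nat.lt_succ_iff.mp hlt))
    · exact (Nat.le_antisymm hee hge) ▸ h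


noncomputable def auxKerCompEquiv {Y' Y M : Type u} [AddCommGroup Y'] [Module R Y']
    [AddCommGroup Y] [Module R Y] [AddCommGroup M] [Module R M]
    (e : Y' ≃ₗ[R] Y) (f : Y →ₗ[R] M) :
    (LinearMap.ker (f ∘ₗ (e : Y' →ₗ[R] Y))) ≃ₗ[R] LinearMap.ker f := by
  refine
  { toFun := fun x => ⟨e x.1, x.2⟩
    invFun := fun y => ⟨e.symm y.1, ?_⟩
    map_add' := by intro a b; ext; simp
    map_smul' := by intro c a; ext; simp
    left_inv := by intro x; ext; simp
    right_inv := by intro y; ext; simp }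
  have := y.2
  simp only [LinearMap.mem_ker, LinearMap.comp_apply, LinearEquiv.coe_coe,
    LinearEquiv.apply_symm_apply]
  exact this

noncomputable def auxKerProdMapEquiv {A B M : Type u} [AddCommGroup A] [Module R A]
    [AddCommGroup B] [Module R B] [AddCommGroup M] [Module R M]
    (f : A →ₗ[R] M) :
    (LinearMap.ker (f.prodMap (LinearMap.id : B →ₗ[R] B))) ≃ₗ[R] LinearMap.ker f := by
  refine
  { toFun := fun x => ⟨x.1.1, ?_⟩
    invFun := fun y => ⟨(y.1, 0), ?_⟩
    map_add' := by intro a b; ext; simp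
    map_smul' := by intro c a; ext; simp
    left_inv := ?_
    right_inv := by intro y; ext; simp }
  · have := x.2
    simp only [LinearMap.mem_ker, LinearMap.prodMap_apply, Prod.mk_eq_zero] at this
    exact this.1
  · have := y.2
    simp only [LinearMap.mem_ker] at this ⊢
    simp [this]
  · intro x
    have := x.2
    simp only [LinearMap.mem_ker, LinearMap.prodMap_apply, Prod.mk_eq_zero,
      LinearMap.id_apply] at this
    ext
    · simp
    · simp [this.2]

theorem auxProjectiveProd {A B : Type u} [AddCommGroup A] [Module R A]
    [AddCommGroup B] [Module R B] [Module.Projective R A] [Module.Projective R B] :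
    Module.Projective R (A × B) := by
  set F := ((A × B) →₀ R)
  let tot : F →ₗ[R] A × B := Finsupp.linearCombination R id
  have htot : Function.Surjective tot := by
    intro x
    exact ⟨Finsupp.single x 1, by rw [Finsupp.linearCombination_single]; simp⟩
  obtain ⟨sA, hsA⟩ := Module.projective_lifting_property tot (LinearMap.inl R A B) htot
  obtain ⟨sB, hsB⟩ := Module.projective_lifting_property tot (LinearMap.inr R A B) htot
  refine Module.Projective.of_split (M := F)
    (sA ∘ₗ LinearMap.fst R A B + sB ∘ₗ LinearMap.snd R A B) tot ?_
  apply LinearMap.ext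
  rintro ⟨a, b⟩
  have h1 := LinearMap.congr_fun hsA a
  have h2 := LinearMap.congr_fun hsB b
  simp only [LinearMap.comp_apply, LinearMap.inl_apply, LinearMap.inr_apply] at h1 h2
  simp [LinearMap.comp_apply, map_add, h1, h2, Prod.ext_iff]

/-- `pd (N × (κ →₀ R)) ≤ e` if `pd N ≤ e`. -/
theorem auxProjDimLE_prodFree {e : ℕ} {N : Type u} [AddCommGroup N] [Module R N]
    (κ : Type u) (h : ProjDimLE R e N) : ProjDimLE R e (N × (κ →₀ R)) := by
  cases e with
  | zero =>
    have : Module.Projective R N := h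
    exact auxProjectiveProd
  | succ e =>
    obtain ⟨ι, f, hf, hk⟩ := h
    let E : ((ι ⊕ κ) →₀ R) ≃ₗ[R] (ι →₀ R) × (κ →₀ R) :=
      Finsupp.sumFinsuppLEquivProdFinsupp R
    let g : ((ι ⊕ κ) →₀ R) →ₗ[R] N × (κ →₀ R) :=
      (f.prodMap LinearMap.id) ∘ₗ E.toLinearMap
    have hg : Function.Surjective g := by
      have : Function.Surjective (f.prodMap (LinearMap.id : (κ →₀ R) →ₗ[R] (κ →₀ R))) :=
        Function.Surjective.prodMap hf Function.surjective_id
      exact this.comp E.surjective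
    refine ⟨ι ⊕ κ, g, hg, ?_⟩
    exact auxProjDimLE_equiv ((auxKerCompEquiv E (f.prodMap LinearMap.id)).trans
      (auxKerProdMapEquiv f)).symm hk

set_option maxHeartbeats 1000000 in
/-- `pd N ≤ e` if `pd (N × (κ →₀ R)) ≤ e`. -/
theorem auxProjDimLE_ofProdFree {e : ℕ} {N κ : Type u} [AddCommGroup N] [Module R N]
    (h : ProjDimLE R e (N × (κ →₀ R))) : ProjDimLE R e N := by
  cases e with
  | zero =>
    have : Module.Projective R (N × (κ →₀ R)) := h
    exact Module.Projective.of_split (LinearMap.inl R N (κ →₀ R)) (LinearMap.fst R N (κ →₀ R))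
      (by ext x; simp)
  | succ e =>
    obtain ⟨ι, f, hf, hk⟩ := h
    let f' : (ι →₀ R) →ₗ[R] N := (LinearMap.fst R N (κ →₀ R)) ∘ₗ f
    have hf' : Function.Surjective f' := (Prod.fst_surjective).comp hf
    refine ⟨ι, f', hf', ?_⟩
    -- π : ker f' → (κ →₀ R), x ↦ (f x).2
    let π : (LinearMap.ker f') →ₗ[R] (κ →₀ R) :=
      (LinearMap.snd R N (κ →₀ R)) ∘ₗ f ∘ₗ (LinearMap.ker f').subtype
    have hπ : Function.Surjective π := by
      intro y
      obtain ⟨x, hx⟩ := hf (0, y)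
      have hx1 : f' x = 0 := by simp [f', hx]
      refine ⟨⟨x, hx1⟩, ?_⟩
      simp [π, hx]
    obtain ⟨s, hs⟩ := Module.projective_lifting_property π LinearMap.id hπ
    have E1 : (LinearMap.ker f') ≃ₗ[R] (LinearMap.ker π × (κ →₀ R)) := auxSplitEquiv (Y := LinearMap.ker f') (P := κ →₀ R) π s hs
    -- ker π ≃ ker f
    have E2 : (LinearMap.ker π) ≃ₗ[R] (LinearMap.ker f) := by
      refine
      { toFun := fun z => ⟨z.1.1, ?_⟩
        invFun := fun w => ⟨⟨w.1, ?_⟩, ?_⟩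
        map_add' := by intro a b; ext; simp
        map_smul' := by intro c a; ext; simp
        left_inv := by intro z; ext; simp
        right_inv := by intro w; ext; simp }
      · have h1 : f' z.1.1 = 0 := z.1.2
        have h2 : π z.1 = 0 := z.2
        simp only [LinearMap.mem_ker]
        simp only [f', LinearMap.comp_apply, LinearMap.fst_apply] at h1
        simp only [π, LinearMap.comp_apply, LinearMap.snd_apply,
          Submodule.coe_subtype] at h2
        exact Prod.ext h1 h2
      · have := w.2
        simp only [LinearMap.mem_ker] at this
        simp [f', LinearMap.mem_ker, this]
      · have := w.2
        simp only [LinearMap.mem_ker] at this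
        simp [π, LinearMap.mem_ker, this]
    have : ProjDimLE R e ((LinearMap.ker f) × (κ →₀ R)) := auxProjDimLE_prodFree κ hk
    exact auxProjDimLE_equiv (E1.trans (LinearEquiv.prodCongr E2 (LinearEquiv.refl R _))).symm this


set_option maxHeartbeats 1000000 in
/-- Schanuel's lemma. -/
theorem auxSchanuel {P Q M : Type u} [AddCommGroup P] [Module R P]
    [AddCommGroup Q] [Module R Q] [AddCommGroup M] [Module R M]
    [Module.Projective R P] [Module.Projective R Q]
    (f : P →ₗ[R] M) (g : Q →ₗ[R] M) (hf : Function.Surjective f)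
    (hg : Function.Surjective g) :
    Nonempty (((LinearMap.ker f) × Q) ≃ₗ[R] ((LinearMap.ker g) × P)) := by
  let D : (P × Q) →ₗ[R] M := f ∘ₗ LinearMap.fst R P Q - g ∘ₗ LinearMap.snd R P Q
  have memD : ∀ x : P × Q, x ∈ LinearMap.ker D ↔ f x.1 = g x.2 := by
    intro x
    simp [D, LinearMap.mem_ker, sub_eq_zero]
  -- Section of fst over ker D
  obtain ⟨u, hu⟩ := Module.projective_lifting_property g f hg
  obtain ⟨v, hv⟩ := Module.projective_lifting_property f g hf
  let π₁ : (LinearMap.ker D) →ₗ[R] P := (LinearMap.fst R P Q) ∘ₗ (LinearMap.ker D).subtype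
  let π₂ : (LinearMap.ker D) →ₗ[R] Q := (LinearMap.snd R P Q) ∘ₗ (LinearMap.ker D).subtype
  let s₁ : P →ₗ[R] LinearMap.ker D :=
    LinearMap.codRestrict (LinearMap.ker D) (LinearMap.prod LinearMap.id u)
      (fun p => by
        rw [memD]
        exact (LinearMap.congr_fun hu p).symm)
  let s₂ : Q →ₗ[R] LinearMap.ker D :=
    LinearMap.codRestrict (LinearMap.ker D) (LinearMap.prod v LinearMap.id)
      (fun q => by
        rw [memD]
        exact LinearMap.congr_fun hv q)
  have hs₁ : π₁ ∘ₗ s₁ = LinearMap.id := by ext p; simp [π₁, s₁]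
  have hs₂ : π₂ ∘ₗ s₂ = LinearMap.id := by ext q; simp [π₂, s₂]
  have E₁ : (LinearMap.ker D) ≃ₗ[R] (LinearMap.ker π₁ × P) :=
    auxSplitEquiv (Y := LinearMap.ker D) (P := P) π₁ s₁ hs₁
  have E₂ : (LinearMap.ker D) ≃ₗ[R] (LinearMap.ker π₂ × Q) :=
    auxSplitEquiv (Y := LinearMap.ker D) (P := Q) π₂ s₂ hs₂
  have F₁ : (LinearMap.ker π₁) ≃ₗ[R] (LinearMap.ker g) := by
    refine
    { toFun := fun z => ⟨z.1.1.2, by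
        have h1 : (z.1 : P × Q).1 = 0 := z.2
        have h2 := (memD z.1).mp z.1.2
        simp only [LinearMap.mem_ker]
        rw [← h2, h1, map_zero]⟩
      invFun := fun w => ⟨⟨(0, w.1), by
          rw [memD]
          simp [LinearMap.mem_ker.mp w.2]⟩, by
        simp [LinearMap.mem_ker, π₁]⟩
      map_add' := by intro a b; ext; simp
      map_smul' := by intro c a; ext; simp
      left_inv := ?_
      right_inv := by intro w; ext; simp }
    intro z
    have h1 : (z.1 : P × Q).1 = 0 := z.2
    ext
    · simp [h1]
    · simp
  have F₂ : (LinearMap.ker π₂) ≃ₗ[R] (LinearMap.ker f) := by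
    refine
    { toFun := fun z => ⟨z.1.1.1, by
        have h1 : (z.1 : P × Q).2 = 0 := z.2
        have h2 := (memD z.1).mp z.1.2
        simp only [LinearMap.mem_ker]
        rw [h2, h1, map_zero]⟩
      invFun := fun w => ⟨⟨(w.1, 0), by
          rw [memD]
          simp [LinearMap.mem_ker.mp w.2]⟩, by
        simp [LinearMap.mem_ker, π₂]⟩
      map_add' := by intro a b; ext; simp
      map_smul' := by intro c a; ext; simp
      left_inv := ?_
      right_inv := by intro w; ext; simp }
    intro z
    have h1 : (z.1 : P × Q).2 = 0 := z.2
    ext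
    · simp
    · simp [h1]
  exact ⟨(LinearEquiv.prodCongr F₂.symm (LinearEquiv.refl R Q)).trans
    (E₂.symm.trans (E₁.trans (LinearEquiv.prodCongr F₁ (LinearEquiv.refl R P))))⟩


set_option maxHeartbeats 1000000 in
/-- Kernel of any surjection from a finite free module has pd one less. -/
theorem auxKerPd {e k : ℕ} {M : Type u} [AddCommGroup M] [Module R M]
    (hM : ProjDimLE R (e + 1) M) (f : (Fin k → R) →ₗ[R] M) (hf : Function.Surjective f) :
    ProjDimLE R e (LinearMap.ker f) := by
  obtain ⟨ι, g, hg, hk⟩ := hM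
  obtain ⟨S⟩ := auxSchanuel f g hf hg
  -- ker g × (Fin k → R)  has pd ≤ e
  have h1 : ProjDimLE R e ((LinearMap.ker g) × (ULift.{u} (Fin k) →₀ R)) :=
    auxProjDimLE_prodFree (ULift.{u} (Fin k)) hk
  have EF : ((LinearMap.ker g) × (ULift.{u} (Fin k) →₀ R)) ≃ₗ[R]
      ((LinearMap.ker g) × (Fin k → R)) :=
    LinearEquiv.prodCongr (LinearEquiv.refl R _)
      ((Finsupp.domLCongr Equiv.ulift).trans (Finsupp.linearEquivFunOnFinite R R (Fin k)))
  have h2 : ProjDimLE R e ((LinearMap.ker f) × (ι →₀ R)) :=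
    auxProjDimLE_equiv (EF.trans S.symm) h1
  exact auxProjDimLE_ofProdFree h2


/-- `Fin (k+1) → R ≃ₗ R × (Fin k → R)`. -/
noncomputable def auxPiFinSucc (k : ℕ) : (Fin (k + 1) → R) ≃ₗ[R] R × (Fin k → R) :=
  { (Fin.consEquiv fun _ => R).symm with
    map_add' := fun _ _ => rfl
    map_smul' := fun _ _ => rfl }


theorem auxExt1Zero_subsingleton {M N : Type u} [AddCommGroup M] [Module R M]
    [AddCommGroup N] [Module R N] (h : Subsingleton N) : Ext1Zero R M N := by
  intro X _ _ i p hi hp hr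
  exact ⟨0, by ext n; exact Subsingleton.elim _ _⟩

theorem auxExt1Zero_equiv {M N N' : Type u} [AddCommGroup M] [Module R M]
    [AddCommGroup N] [Module R N] [AddCommGroup N'] [Module R N']
    (E : N ≃ₗ[R] N') (h : Ext1Zero R M N) : Ext1Zero R M N' := by
  intro X _ _ i p hi hp hr
  obtain ⟨r, hrr⟩ := h X (i ∘ₗ E.toLinearMap) p (hi.comp E.injective) hp (by
    rw [LinearMap.range_comp, LinearEquiv.range, Submodule.map_top, hr])
  refine ⟨E.toLinearMap ∘ₗ r, ?_⟩
  ext n'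
  have := LinearMap.congr_fun hrr (E.symm n')
  simp only [LinearMap.comp_apply, LinearEquiv.coe_coe, LinearMap.id_apply] at this ⊢
  rw [LinearEquiv.apply_symm_apply] at this
  rw [this, LinearEquiv.apply_symm_apply]

theorem auxExt1Zero_fst {M A B : Type u} [AddCommGroup M] [Module R M]
    [AddCommGroup A] [Module R A] [AddCommGroup B] [Module R B]
    (h : Ext1Zero R M (A × B)) : Ext1Zero R M A := by
  intro X _ _ i p hi hp hr
  let i₂ : (A × B) →ₗ[R] (X × B) := i.prodMap LinearMap.id
  let p₂ : (X × B) →ₗ[R] M := p ∘ₗ LinearMap.fst R X B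
  have hi₂ : Function.Injective i₂ := Function.Injective.prodMap hi (fun a b h => h)
  have hp₂ : Function.Surjective p₂ := hp.comp Prod.fst_surjective
  have hr₂ : LinearMap.range i₂ = LinearMap.ker p₂ := by
    ext ⟨x, b⟩
    simp only [LinearMap.mem_range, LinearMap.mem_ker, i₂, p₂, LinearMap.comp_apply,
      LinearMap.fst_apply, LinearMap.prodMap_apply, LinearMap.id_apply, Prod.ext_iff]
    constructor
    · rintro ⟨⟨a, b'⟩, ha, hb⟩
      have : x ∈ LinearMap.range i := ⟨a, ha⟩
      rw [hr] at this
      exact this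
    · intro hx
      have : x ∈ LinearMap.ker p := hx
      rw [← hr] at this
      obtain ⟨a, ha⟩ := this
      exact ⟨(a, b), ha, rfl⟩
  obtain ⟨r₂, hrr⟩ := h (X × B) i₂ p₂ hi₂ hp₂ hr₂
  refine ⟨(LinearMap.fst R A B) ∘ₗ r₂ ∘ₗ (LinearMap.inl R X B), ?_⟩
  ext a
  have := LinearMap.congr_fun hrr (a, 0)
  simp only [LinearMap.comp_apply, LinearMap.id_apply, i₂, LinearMap.prodMap_apply,
    LinearMap.inl_apply, LinearMap.id_apply, map_zero] at this ⊢
  rw [this]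
  rfl


set_option maxHeartbeats 1000000 in
theorem auxExt1Zero_prod {M A B : Type u} [AddCommGroup M] [Module R M]
    [AddCommGroup A] [Module R A] [AddCommGroup B] [Module R B]
    (hA : Ext1Zero R M A) (hB : Ext1Zero R M B) : Ext1Zero R M (A × B) := by
  intro X _ _ i p hi hp hr
  -- quotient by i(A × 0)
  set U : Submodule R X := LinearMap.range (i ∘ₗ LinearMap.inl R A B) with hU
  have hUle : U ≤ LinearMap.ker p := by
    rintro x ⟨a, rfl⟩
    have : i (a, 0) ∈ LinearMap.range i := ⟨(a, 0), rfl⟩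
    rw [hr] at this
    exact this
  let q : X →ₗ[R] (X ⧸ U) := U.mkQ
  let i' : B →ₗ[R] (X ⧸ U) := q ∘ₗ i ∘ₗ LinearMap.inr R A B
  let p' : (X ⧸ U) →ₗ[R] M := U.liftQ p hUle
  have hq : ∀ x, p' (q x) = p x := fun x => rfl
  have hi' : Function.Injective i' := by
    intro b b' hbb
    have : i (0, b) - i (0, b') ∈ U := by
      rw [← Submodule.Quotient.eq]
      exact hbb
    rw [← map_sub] at this
    obtain ⟨a, ha⟩ := this
    have : (a, (0 : B)) = ((0 : A), b - b') := hi (by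
      simpa [Prod.sub_def] using ha)
    have hb := congrArg Prod.snd this
    simpa [sub_eq_zero] using hb.symm
  have hp' : Function.Surjective p' := by
    intro m
    obtain ⟨x, hx⟩ := hp m
    exact ⟨q x, by rw [hq, hx]⟩
  have hr' : LinearMap.range i' = LinearMap.ker p' := by
    apply le_antisymm
    · rintro _ ⟨b, rfl⟩
      have : p (i (0, b)) = 0 := by
        have : i (0, b) ∈ LinearMap.ker p := by
          rw [← hr]; exact ⟨(0, b), rfl⟩
        exact this
      simpa [LinearMap.mem_ker, i', hq] using this
    · rintro x' hx'
      obtain ⟨x, rfl⟩ := U.mkQ_surjective x'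
      have hpx : p x = 0 := hx'
      have : x ∈ LinearMap.range i := by rw [hr]; exact hpx
      obtain ⟨⟨a, b⟩, rfl⟩ := this
      refine ⟨b, ?_⟩
      have hdiff : i (a, b) - i (0, b) ∈ U := by
        rw [← map_sub]
        exact ⟨a, by simp only [LinearMap.comp_apply, LinearMap.inl_apply, Prod.mk_sub_mk, sub_self, sub_zero]⟩
      exact ((Submodule.Quotient.eq U).mpr (by simpa [neg_sub] using U.neg_mem hdiff) :
        U.mkQ (i (0, b)) = U.mkQ (i (a, b)))
  obtain ⟨rB, hrB⟩ := hB (X ⧸ U) i' p' hi' hp' hr'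
  let t : X →ₗ[R] B := rB ∘ₗ q
  have ht : ∀ a b, t (i (a, b)) = b := by
    intro a b
    have hdiff : i (a, b) - i (0, b) ∈ U := by
      rw [← map_sub]
      exact ⟨a, by simp only [LinearMap.comp_apply, LinearMap.inl_apply, Prod.mk_sub_mk, sub_self, sub_zero]⟩
    have hqq : q (i (a, b)) = q (i (0, b)) :=
      ((Submodule.Quotient.eq U).mpr hdiff :
        U.mkQ (i (a, b)) = U.mkQ (i (0, b)))
    have := LinearMap.congr_fun hrB b
    simp only [LinearMap.comp_apply, LinearMap.id_apply, i'] at this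
    show rB (q (i (a, b))) = b
    rw [hqq]
    exact this
  -- second extension: ker t
  let W := LinearMap.ker t
  have hiW : ∀ a : A, i (a, 0) ∈ W := fun a => by
    simp [W, LinearMap.mem_ker, ht a 0]
  let i'' : A →ₗ[R] W := LinearMap.codRestrict W (i ∘ₗ LinearMap.inl R A B) hiW
  let p'' : W →ₗ[R] M := p ∘ₗ W.subtype
  have hi'' : Function.Injective i'' := by
    intro a a' haa
    have : i (a, 0) = i (a', 0) := congrArg Subtype.val haa
    have := hi this
    exact (congrArg Prod.fst this)
  have hp'' : Function.Surjective p'' := by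
    intro m
    obtain ⟨x, hx⟩ := hp m
    have h1 : t (x - i (0, t x)) = 0 := by
      simp [map_sub, ht]
    have h2 : p (x - i (0, t x)) = p x := by
      have : i (0, t x) ∈ LinearMap.ker p := by rw [← hr]; exact ⟨(0, t x), rfl⟩
      simp only [map_sub]
      rw [show p (i (0, t x)) = 0 from this]
      abel
    exact ⟨⟨x - i (0, t x), h1⟩, by simpa [p'', h2] using hx⟩
  have hr'' : LinearMap.range i'' = LinearMap.ker p'' := by
    apply le_antisymm
    · rintro _ ⟨a, rfl⟩
      have : i (a, 0) ∈ LinearMap.ker p := by rw [← hr]; exact ⟨(a, 0), rfl⟩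
      exact this
    · rintro ⟨x, hxW⟩ hx
      have hpx : p x = 0 := hx
      have : x ∈ LinearMap.range i := by rw [hr]; exact hpx
      obtain ⟨⟨a, b⟩, rfl⟩ := this
      have hb : b = 0 := by
        have : t (i (a, b)) = 0 := hxW
        rwa [ht] at this
      subst hb
      exact ⟨a, rfl⟩
  obtain ⟨rA, hrA⟩ := hA W i'' p'' hi'' hp'' hr''
  -- assemble the retraction
  have hmem : ∀ x : X, x - i (0, t x) ∈ W := by
    intro x
    simp [W, LinearMap.mem_ker, map_sub, ht]
  let c : X →ₗ[R] W := LinearMap.codRestrict W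
    (LinearMap.id - i ∘ₗ (LinearMap.inr R A B) ∘ₗ t) hmem
  refine ⟨(rA ∘ₗ c).prod t, ?_⟩
  apply LinearMap.ext
  rintro ⟨a, b⟩
  have h1 : c (i (a, b)) = i'' a := by
    apply Subtype.ext
    show i (a, b) - i (0, t (i (a, b))) = i (a, 0)
    rw [ht, ← map_sub]
    congr 1
    simp [Prod.mk_sub_mk]
  have h2 := LinearMap.congr_fun hrA a
  simp only [LinearMap.comp_apply, LinearMap.id_apply] at h2
  simp only [LinearMap.comp_apply, LinearMap.prod_apply, Function.prod, LinearMap.id_apply]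
  rw [h1]
  rw [h2, ht]


theorem auxExt1Zero_pi {M : Type u} [AddCommGroup M] [Module R M]
    (h : Ext1Zero R M R) (k : ℕ) : Ext1Zero R M (Fin k → R) := by
  induction k with
  | zero =>
    exact auxExt1Zero_subsingleton ⟨fun f g => funext fun x => x.elim0⟩
  | succ k ih =>
    exact auxExt1Zero_equiv (auxPiFinSucc k).symm (auxExt1Zero_prod h ih)

theorem auxFinNPres_finite {n : ℕ} {M : Type u} [AddCommGroup M] [Module R M]
    (h : FinNPres R n M) : Module.Finite R M := by
  cases n with
  | zero => exact h
  | succ n =>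
    obtain ⟨k, f, hf, -⟩ := h
    exact Module.Finite.of_surjective f hf

theorem auxFinNPres_of_finite_projective (n : ℕ) {M : Type u} [AddCommGroup M] [Module R M]
    (hfin : Module.Finite R M) (hproj : Module.Projective R M) : FinNPres R n M := by
  induction n generalizing M with
  | zero => exact hfin
  | succ n ih =>
    obtain ⟨k, f, hf⟩ := Module.Finite.exists_fin' R M
    obtain ⟨s, hs⟩ := Module.projective_lifting_property f LinearMap.id hf
    refine ⟨k, f, hf, ?_⟩
    have E := auxSplitEquiv (Y := Fin k → R) (P := M) f s hs
    have hker_proj : Module.Projective R (LinearMap.ker f) := auxKerProjective f s hs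
    have hker_fin : Module.Finite R (LinearMap.ker f) := by
      have hsurj : Function.Surjective ((LinearMap.fst R (LinearMap.ker f) M) ∘ₗ E.toLinearMap) :=
        Prod.fst_surjective.comp E.surjective
      exact Module.Finite.of_surjective _ hsurj
    exact ih hker_fin hker_proj

set_option maxHeartbeats 1000000 in
theorem auxMain {n d : ℕ} (hcoh : NDCohRing R n (d : ℕ∞)) (hself : FPdInj R n (d : ℕ∞) R)
    (e : ℕ) (he : e ≤ d) :
    ∀ (M : Type u) [AddCommGroup M] [Module R M],
      FinNPres R n M → ProjDimLE R e M → Module.Projective R M := by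
  induction e with
  | zero =>
    intro M _ _ _ h
    exact h
  | succ e ih =>
    intro M _ _ hfp hpd
    have hpd' : ProjDimLE' R (d : ℕ∞) M := by
      intro j hj
      have hjd : j = d := by exact_mod_cast hj
      subst hjd
      exact auxProjDimLE_mono he hpd
    obtain ⟨k, f, hf, hKfp⟩ := hcoh M hfp hpd'
    have hKpd : ProjDimLE R e (LinearMap.ker f) := auxKerPd hpd f hf
    have hKproj : Module.Projective R (LinearMap.ker f) :=
      ih (Nat.le_of_succ_le he) (LinearMap.ker f) hKfp hKpd
    have hKfin : Module.Finite R (LinearMap.ker f) := auxFinNPres_finite hKfp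
    -- K is a direct summand of a finite free module
    obtain ⟨m, g, hg⟩ := Module.Finite.exists_fin' R (LinearMap.ker f)
    obtain ⟨sg, hsg⟩ := Module.projective_lifting_property g LinearMap.id hg
    have EK : (Fin m → R) ≃ₗ[R] (LinearMap.ker g × LinearMap.ker f) :=
      auxSplitEquiv (Y := Fin m → R) (P := LinearMap.ker f) g sg hsg
    -- Ext¹(M, K) = 0
    have e1 : Ext1Zero R M R := hself M hfp hpd'
    have e2 : Ext1Zero R M (Fin m → R) := auxExt1Zero_pi e1 m
    have e3 : Ext1Zero R M (LinearMap.ker f × LinearMap.ker g) :=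
      auxExt1Zero_equiv (EK.trans (LinearEquiv.prodComm R _ _)) e2
    have e4 : Ext1Zero R M (LinearMap.ker f) := auxExt1Zero_fst e3
    -- split the presentation
    obtain ⟨r, hrr⟩ := e4 (Fin k → R) (LinearMap.ker f).subtype f
      (Submodule.injective_subtype _) hf (Submodule.range_subtype _)
    -- build a linear section of f
    have hkill : LinearMap.ker f ≤
        LinearMap.ker (LinearMap.id - (LinearMap.ker f).subtype ∘ₗ r) := by
      intro x hx
      have := LinearMap.congr_fun hrr ⟨x, hx⟩
      simp only [LinearMap.comp_apply, LinearMap.id_apply, Submodule.coe_subtype] at this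
      simp only [LinearMap.mem_ker, LinearMap.sub_apply, LinearMap.comp_apply,
        LinearMap.id_apply, Submodule.coe_subtype]
      rw [this]
      simp
    let φ : (Fin k → R) →ₗ[R] (Fin k → R) := LinearMap.id - (LinearMap.ker f).subtype ∘ₗ r
    let s₀ : ((Fin k → R) ⧸ LinearMap.ker f) →ₗ[R] (Fin k → R) :=
      (LinearMap.ker f).liftQ φ hkill
    let Ef : ((Fin k → R) ⧸ LinearMap.ker f) ≃ₗ[R] M := f.quotKerEquivOfSurjective hf
    let s : M →ₗ[R] (Fin k → R) := s₀ ∘ₗ Ef.symm.toLinearMap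
    have hfs : f ∘ₗ s = LinearMap.id := by
      apply LinearMap.ext
      intro mm
      obtain ⟨x, rfl⟩ := hf mm
      have hEf : Ef (Submodule.Quotient.mk x) = f x := by
        simp [Ef, LinearMap.quotKerEquivOfSurjective]
      have hsymm : Ef.symm (f x) = Submodule.Quotient.mk x := by
        rw [← hEf, LinearEquiv.symm_apply_apply]
      have hs0 : s₀ (Submodule.Quotient.mk x) = φ x := rfl
      have hfφ : f (φ x) = f x := by
        have hmem : (r x : Fin k → R) ∈ LinearMap.ker f := (r x).2
        simp only [φ, LinearMap.sub_apply, LinearMap.id_apply, LinearMap.comp_apply,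
          Submodule.coe_subtype, map_sub]
        rw [show f ((r x : Fin k → R)) = 0 from hmem]
        abel
      show f (s (f x)) = f x
      simp only [s, LinearMap.comp_apply, LinearEquiv.coe_coe]
      rw [hsymm, hs0, hfφ]
    exact Module.Projective.of_split s f hfs

end Aux

/-- If `R` is left `(n,d)`-coherent and left self-`FPₙ^{≤d}`-injective with `d` finite, then
`FPₙ^{≤d}(R)` coincides with the class of finitely generated projective `R`-modules. -/
theorem fp_n_le_d_eq_proj_of_selfInj (R : Type u) [Ring R] (n : ℕ) (hn : 1 ≤ n)
    (d : ℕ) (hd : 1 ≤ d) (hcoh : NDCohRing R n (d : ℕ∞)) (hself : FPdInj R n (d : ℕ∞) R) :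
    ∀ (M : Type u) [AddCommGroup M] [Module R M],
      (FinNPres R n M ∧ ProjDimLE R d M) ↔ (Module.Finite R M ∧ Module.Projective R M) := by
  intro M _ _
  constructor
  · rintro ⟨h1, h2⟩
    exact ⟨auxFinNPres_finite h1, auxMain hcoh hself d le_rfl M h1 h2⟩
  · rintro ⟨hfin, hproj⟩
    exact ⟨auxFinNPres_of_finite_projective n hfin hproj,
      auxProjDimLE_mono (Nat.zero_le d) (auxProjDimLE_zero hproj)⟩
end
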